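/- arXiv:1009.2158 — 2 statements merged into one kernel-verified Lean document; each statement's English description precedes it below -/
import Mathlib

section
/- For all quaternions a, b, y, z, the sum ((a*y)*(star z))*(star b) + ((a*z)*(star y))*(star b) + ((b*y)*(star z))*(star a) + ((b*z)*(star y))*(star a) equals (4 * re(a * star b) * re(y * star z)) • 1, i.e. it is the real scalar 4·Re(a b̄)·Re(y z̄). -/
/-- For all quaternions `a b y z`, the symmetrized sum equals the real scalar
`4 Re(a b*) Re(y z*)`. -/
theorem quaternion_pairing_identity_sym (a b y z : Quaternion ℝ) :
    ((a * y) * star z) * star b + ((a * z) * star y) * star b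
      + ((b * y) * star z) * star a + ((b * z) * star y) * star a
      = (4 * (a * star b).re * (y * star z).re) • (1 : Quaternion ℝ) := by
  ext <;> simp [Quaternion.re_mul, Quaternion.imI_mul, Quaternion.imJ_mul, Quaternion.imK_mul, Quaternion.re_one, Quaternion.imI_one, Quaternion.imJ_one, Quaternion.imK_one] <;> ring
end

section
/- For all octonions a, y, z, the identity (a*y)*(star z) + (a*z)*(star y) = (2 * re(y * star z)) • a holds, even though octonion multiplication is not associative. -/
noncomputable section

/-- The octonions realized as the Cayley–Dickson double of the quaternions. -/
abbrev Octonion := Quaternion ℝ × Quaternion ℝ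

/-- Cayley–Dickson multiplication: `(ξ, η)(γ, δ) = (ξγ − δ*η, δξ + ηγ*)`. -/
def omul (x y : Octonion) : Octonion :=
  (x.1 * y.1 - star y.2 * x.2, y.2 * x.1 + x.2 * star y.1)

/-- Octonion conjugation: `star (ξ, η) = (ξ*, −η)`. -/
def ostar (x : Octonion) : Octonion := (star x.1, -x.2)

/-- Real part of an octonion. -/
def ore (x : Octonion) : ℝ := x.1.re

lemma quat_key (p q : Quaternion ℝ) :
    p * star q + q * star p = ((2 * (p * star q).re : ℝ) : Quaternion ℝ) := by
  rw [← Quaternion.self_add_star' (p * star q), star_mul, star_star]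

lemma quat_key' (p q : Quaternion ℝ) :
    star p * q + star q * p = ((2 * (star p * q).re : ℝ) : Quaternion ℝ) := by
  rw [← Quaternion.self_add_star' (star p * q), star_mul, star_star]

/-- For all octonions `a y z`, `(a*y)*z* + (a*z)*y* = 2 Re(y z*) • a`. -/
theorem octonion_pairing_identity (a y z : Octonion) :
    omul (omul a y) (ostar z) + omul (omul a z) (ostar y)
      = (2 * ore (omul y (ostar z))) • a := by
  obtain ⟨a1, a2⟩ := a
  obtain ⟨y1, y2⟩ := y
  obtain ⟨z1, z2⟩ := z
  simp only [omul, ostar, ore, star_neg, neg_neg, star_star, Prod.mk_add_mk, Prod.smul_mk,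
    Prod.mk.injEq]
  have hre : (y1 * star z1 - -star z2 * y2).re
      = (y1 * star z1).re + (star z2 * y2).re := by
    simp [Quaternion.re_sub]
  constructor
  · rw [← Quaternion.coe_mul_eq_smul]
    calc (a1 * y1 - star y2 * a2) * star z1 - -star z2 * (y2 * a1 + a2 * star y1) +
        ((a1 * z1 - star z2 * a2) * star y1 - -star y2 * (z2 * a1 + a2 * star z1))
        = a1 * (y1 * star z1 + z1 * star y1) + (star z2 * y2 + star y2 * z2) * a1 := by
          noncomm_ring
      _ = a1 * ((2 * (y1 * star z1).re : ℝ) : Quaternion ℝ)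
            + ((2 * (star z2 * y2).re : ℝ) : Quaternion ℝ) * a1 := by
          rw [quat_key y1 z1, quat_key' z2 y2]
      _ = ((2 * (y1 * star z1 - -star z2 * y2).re : ℝ) : Quaternion ℝ) * a1 := by
          rw [← Quaternion.coe_commutes, ← add_mul, ← Quaternion.coe_add, hre]
          congr 1
          ring
  · rw [← Quaternion.coe_mul_eq_smul]
    have k1 := quat_key z2 y2
    have k2 := quat_key' y1 z1
    calc -z2 * (a1 * y1 - star y2 * a2) + (y2 * a1 + a2 * star y1) * z1 +
        (-y2 * (a1 * z1 - star z2 * a2) + (z2 * a1 + a2 * star z1) * y1)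
        = (z2 * star y2 + y2 * star z2) * a2 + a2 * (star y1 * z1 + star z1 * y1) := by
          noncomm_ring
      _ = ((2 * (z2 * star y2).re : ℝ) : Quaternion ℝ) * a2
            + a2 * ((2 * (star y1 * z1).re : ℝ) : Quaternion ℝ) := by rw [k1, k2]
      _ = ((2 * (y1 * star z1 - -star z2 * y2).re : ℝ) : Quaternion ℝ) * a2 := by
          rw [← Quaternion.coe_commutes, ← add_mul, ← Quaternion.coe_add, hre]
          have e1 : (z2 * star y2).re = (star z2 * y2).re := by
            simp [Quaternion.re_mul]
          have e2 : (star y1 * z1).re = (y1 * star z1).re := by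
            simp [Quaternion.re_mul]
          rw [e1, e2]
          congr 1
          ring
end
end
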